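/- arXiv:1311.7348 — 7 statements merged into one kernel-verified Lean document; each statement's English description precedes it below -/
import Mathlib

section
/- Let f* be a strictly positive feasible vector of path flows that maximizes the aggregate utility U(f) = ∑_{j=1}^ρ log(f_j) over all strictly positive feasible vectors of path flows. Then f* is proportionally fair, i.e. for every feasible vector of path flows g one has ∑_{j=1}^ρ (g_j − f*_j)/f*_j ≤ 0. -/
open Finset

/-- A vector of path flows is feasible if it is nonnegative and respects the
link capacities. -/
def Feasible {η ρ : ℕ} (B : Fin η → Fin ρ → ℝ) (c : Fin η → ℝ)
    (f : Fin ρ → ℝ) : Prop :=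
  (∀ j, 0 ≤ f j) ∧ ∀ i, ∑ j, B i j * f j ≤ c i

lemma log_lower_bound (x : ℝ) (hx : -(1/2) ≤ x) :
    x - 2*x^2 ≤ Real.log (1+x) := by
  have h1 : (0:ℝ) < 1 + x := by linarith
  have h2 : (0:ℝ) < (1+x)⁻¹ := by positivity
  have h3 := Real.log_le_sub_one_of_pos h2
  rw [Real.log_inv] at h3
  have h4 : 1 - (1+x)⁻¹ ≤ Real.log (1+x) := by linarith
  have h5 : 1 - (1+x)⁻¹ = x / (1+x) := by field_simp; ring
  rw [h5] at h4
  have h6 : x - 2*x^2 ≤ x / (1+x) := by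
    rw [le_div_iff₀ h1]
    nlinarith [mul_nonneg (sq_nonneg x) (show (0:ℝ) ≤ 1+2*x by linarith)]
  linarith

/-- A strictly positive feasible maximizer of the aggregate utility
`U(f) = ∑ j, log (f j)` over strictly positive feasible vectors of path flows
is proportionally fair. -/
theorem maximizer_of_log_utility_is_proportionally_fair
    (η ρ : ℕ) (hη : 0 < η) (hρ : 0 < ρ)
    (B : Fin η → Fin ρ → ℝ) (hB : ∀ i j, B i j = 0 ∨ B i j = 1)
    (c : Fin η → ℝ) (hc : ∀ i, 0 < c i)
    (f : Fin ρ → ℝ) (hfpos : ∀ j, 0 < f j) (hffeas : Feasible B c f)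
    (hmax : ∀ g : Fin ρ → ℝ, (∀ j, 0 < g j) → Feasible B c g →
      ∑ j, Real.log (g j) ≤ ∑ j, Real.log (f j)) :
    ∀ g : Fin ρ → ℝ, Feasible B c g → ∑ j, (g j - f j) / f j ≤ 0 := by
  intro g hgfeas
  by_contra hS
  push_neg at hS
  set a : Fin ρ → ℝ := fun j => (g j - f j) / f j with ha
  set S : ℝ := ∑ j, a j with hSdef
  set Q : ℝ := ∑ j, (a j)^2 with hQdef
  have hQ0 : 0 ≤ Q := Finset.sum_nonneg fun j _ => sq_nonneg _
  -- choose the step size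
  set t : ℝ := min (S/(4*Q+1)) (1/(2*(Q+1))) with ht
  have ht0 : 0 < t := by
    apply lt_min
    · positivity
    · positivity
  have ht1 : t ≤ 1/(2*(Q+1)) := min_le_right _ _
  have ht2 : t ≤ S/(4*Q+1) := min_le_left _ _
  have thalf : t ≤ 1/2 := by
    have : 1/(2*(Q+1)) ≤ 1/2 := by
      apply div_le_div_of_nonneg_left <;> linarith
    linarith
  -- bound |a j| by sqrt Q
  have habound : ∀ j, |a j| ≤ Real.sqrt Q := by
    intro j
    have h1 : (a j)^2 ≤ Q := by
      rw [hQdef]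
      exact Finset.single_le_sum (fun k _ => sq_nonneg (a k)) (Finset.mem_univ j)
    have := Real.sqrt_le_sqrt h1
    rwa [Real.sqrt_sq_eq_abs] at this
  have hsqrtQ : Real.sqrt Q ≤ Q + 1 := by
    nlinarith [Real.sq_sqrt hQ0, Real.sqrt_nonneg Q, sq_nonneg (Real.sqrt Q - 1)]
  have hta : ∀ j, |t * a j| ≤ 1/2 := by
    intro j
    rw [abs_mul, abs_of_pos ht0]
    calc t * |a j| ≤ (1/(2*(Q+1))) * (Q+1) := by
          apply mul_le_mul ht1 ((habound j).trans hsqrtQ) (abs_nonneg _) (by positivity)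
      _ = 1/2 := by field_simp
  -- the perturbed flow
  set h : Fin ρ → ℝ := fun j => f j + t * (g j - f j) with hh
  have hhpos : ∀ j, 0 < h j := by
    intro j
    have h1 := hfpos j
    have h2 := hgfeas.1 j
    have : h j = (1-t) * f j + t * g j := by simp [hh]; ring
    rw [this]
    have : 0 < (1-t) * f j := by nlinarith
    nlinarith
  have hhfeas : Feasible B c h := by
    constructor
    · intro j; exact (hhpos j).le
    · intro i
      have heq : ∑ j, B i j * h j
          = (1-t) * (∑ j, B i j * f j) + t * (∑ j, B i j * g j) := by
        rw [Finset.mul_sum, Finset.mul_sum, ← Finset.sum_add_distrib]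
        apply Finset.sum_congr rfl
        intro j _
        simp only [hh]; ring
      rw [heq]
      have h1 := hffeas.2 i
      have h2 := hgfeas.2 i
      nlinarith
  -- apply maximality
  have hle := hmax h hhpos hhfeas
  have hsum : ∑ j, (Real.log (h j) - Real.log (f j)) ≤ 0 := by
    rw [Finset.sum_sub_distrib]; linarith
  -- rewrite each term
  have hterm : ∀ j, Real.log (h j) - Real.log (f j) = Real.log (1 + t * a j) := by
    intro j
    rw [← Real.log_div (ne_of_gt (hhpos j)) (ne_of_gt (hfpos j))]
    congr 1
    simp only [hh, ha]
    rw [add_div, div_self (ne_of_gt (hfpos j)), mul_div_assoc]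
  have hlb : ∀ j, t * a j - 2*(t * a j)^2 ≤ Real.log (1 + t * a j) := by
    intro j
    apply log_lower_bound
    have := hta j
    rw [abs_le] at this
    linarith [this.1]
  have hsum2 : ∑ j, (t * a j - 2*(t * a j)^2) ≤ 0 := by
    calc ∑ j, (t * a j - 2*(t * a j)^2)
        ≤ ∑ j, Real.log (1 + t * a j) := Finset.sum_le_sum fun j _ => hlb j
      _ = ∑ j, (Real.log (h j) - Real.log (f j)) := by
          apply Finset.sum_congr rfl; intro j _; rw [hterm j]
      _ ≤ 0 := hsum
  have heval : ∑ j, (t * a j - 2*(t * a j)^2) = t * S - 2 * t^2 * Q := by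
    rw [Finset.sum_sub_distrib, ← Finset.mul_sum, ← hSdef]
    congr 1
    rw [Finset.mul_sum]
    apply Finset.sum_congr rfl
    intro j _; ring
  rw [heval] at hsum2
  -- but t * S - 2 t² Q > 0, contradiction
  have hfinal : 0 < t * S - 2 * t^2 * Q := by
    have h1 : 2 * t * Q < S := by
      have h2 : t * (4*Q+1) ≤ S := by
        rw [← le_div_iff₀ (by positivity : (0:ℝ) < 4*Q+1)] at *
        exact ht2
      nlinarith
    nlinarith
  linarith
end

section
/- Let f* be a proportionally fair vector of path flows. Then f* maximizes the aggregate utility U(f) = ∑_{j=1}^ρ log(f_j) over all strictly positive feasible vectors of path flows, i.e. for every feasible g with g_j > 0 for all j, ∑_{j=1}^ρ log(g_j) ≤ ∑_{j=1}^ρ log(f*_j). -/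
open Finset

/-- A proportionally fair vector of path flows maximizes the aggregate utility
`U(f) = ∑ j, log (f j)` over all strictly positive feasible vectors of path
flows. -/
theorem proportionally_fair_maximizes_log_utility
    (η ρ : ℕ) (hη : 0 < η) (hρ : 0 < ρ)
    (B : Fin η → Fin ρ → ℝ) (hB : ∀ i j, B i j = 0 ∨ B i j = 1)
    (c : Fin η → ℝ) (hc : ∀ i, 0 < c i)
    (f : Fin ρ → ℝ) (hfpos : ∀ j, 0 < f j) (hffeas : Feasible B c f)
    (hpf : ∀ g : Fin ρ → ℝ, Feasible B c g → ∑ j, (g j - f j) / f j ≤ 0) :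
    ∀ g : Fin ρ → ℝ, (∀ j, 0 < g j) → Feasible B c g →
      ∑ j, Real.log (g j) ≤ ∑ j, Real.log (f j) := by
  intro g hg hgfeas
  have key := hpf g hgfeas
  have h1 : ∀ j, Real.log (g j) - Real.log (f j) ≤ (g j - f j) / f j := by
    intro j
    rw [← Real.log_div (hg j).ne' (hfpos j).ne']
    have := Real.log_le_sub_one_of_pos (div_pos (hg j) (hfpos j))
    calc Real.log (g j / f j) ≤ g j / f j - 1 := this
      _ = (g j - f j) / f j := by rw [sub_div, div_self (hfpos j).ne']
  have : ∑ j, (Real.log (g j) - Real.log (f j)) ≤ ∑ j, (g j - f j) / f j :=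
    Finset.sum_le_sum fun j _ => h1 j
  have := this.trans key
  rw [Finset.sum_sub_distrib] at this
  linarith
end

section
/- Assume every path contains at least one link (for each j there exists i with B i j = 1), and assume there exists a feasible vector of path flows that is strictly positive in every coordinate. Then there exists exactly one strictly positive feasible vector of path flows f* maximizing U(f) = ∑_{j=1}^ρ log(f_j) over all strictly positive feasible vectors of path flows; consequently there is exactly one proportionally fair vector of path flows. -/
open Finset

/-- A strictly positive feasible vector of path flows is proportionally fair if
the sum of proportional changes towards any other feasible vector is
non-positive. -/
def ProportionallyFair {η ρ : ℕ} (B : Fin η → Fin ρ → ℝ) (c : Fin η → ℝ)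
    (f : Fin ρ → ℝ) : Prop :=
  Feasible B c f ∧ (∀ j, 0 < f j) ∧
    ∀ g : Fin ρ → ℝ, Feasible B c g → ∑ j, (g j - f j) / f j ≤ 0

private lemma log_one_add_aux {x : ℝ} (hx : -1 < x) :
    x / (1 + x) ≤ Real.log (1 + x) := by
  have h1 : 0 < 1 + x := by linarith
  have h2 := Real.log_le_sub_one_of_pos (inv_pos.mpr h1)
  rw [Real.log_inv] at h2
  have h4 : x / (1 + x) = 1 - (1 + x)⁻¹ := by field_simp; ring
  rw [h4]; linarith

/-- midpoint of two feasible vectors is feasible -/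
private lemma feasible_mid {η ρ : ℕ} (B : Fin η → Fin ρ → ℝ) (c : Fin η → ℝ)
    {f g : Fin ρ → ℝ} (hf : Feasible B c f) (hg : Feasible B c g) :
    Feasible B c (fun j => (f j + g j) / 2) := by
  refine ⟨fun j => by have := hf.1 j; have := hg.1 j; linarith, fun i => ?_⟩
  have h1 := hf.2 i
  have h2 := hg.2 i
  have : ∑ j, B i j * ((f j + g j) / 2)
      = ((∑ j, B i j * f j) + ∑ j, B i j * g j) / 2 := by
    rw [← Finset.sum_add_distrib, Finset.sum_div]
    exact Finset.sum_congr rfl fun j _ => by ring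
  rw [this]; linarith

set_option maxHeartbeats 1600000 in
/-- If every path contains at least one link and some strictly positive
feasible vector of path flows exists, then there is exactly one strictly
positive feasible maximizer of `U(f) = ∑ j, log (f j)` over strictly positive
feasible vectors, and, consequently, exactly one proportionally fair vector of
path flows. -/
theorem exists_unique_log_utility_maximizer_and_proportionally_fair
    (η ρ : ℕ) (hη : 0 < η) (hρ : 0 < ρ)
    (B : Fin η → Fin ρ → ℝ) (hB : ∀ i j, B i j = 0 ∨ B i j = 1)
    (c : Fin η → ℝ) (hc : ∀ i, 0 < c i)
    (hlink : ∀ j, ∃ i, B i j = 1)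
    (hpos_feas : ∃ f : Fin ρ → ℝ, (∀ j, 0 < f j) ∧ Feasible B c f) :
    (∃! f : Fin ρ → ℝ, (∀ j, 0 < f j) ∧ Feasible B c f ∧
       ∀ g : Fin ρ → ℝ, (∀ j, 0 < g j) → Feasible B c g →
         ∑ j, Real.log (g j) ≤ ∑ j, Real.log (f j)) ∧
    (∃! f : Fin ρ → ℝ, ProportionallyFair B c f) := by
  classical
  obtain ⟨f₀, hf₀pos, hf₀⟩ := hpos_feas
  set U : (Fin ρ → ℝ) → ℝ := fun f => ∑ j, Real.log (f j) with hU
  set P : (Fin ρ → ℝ) → Prop := fun f => (∀ j, 0 < f j) ∧ Feasible B c f ∧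
       ∀ g : Fin ρ → ℝ, (∀ j, 0 < g j) → Feasible B c g → U g ≤ U f with hP
  set C : ℝ := 1 + ∑ i, c i with hCdef
  have hC1 : (1 : ℝ) ≤ C := by
    have : (0:ℝ) ≤ ∑ i, c i := Finset.sum_nonneg fun i _ => (hc i).le
    simp [hCdef]; linarith
  have hC0 : (0 : ℝ) < C := by linarith
  -- feasible flows are bounded by C
  have hfleC : ∀ f, Feasible B c f → ∀ j, f j ≤ C := by
    intro f hf j
    obtain ⟨i, hi⟩ := hlink j
    have hterm : ∀ k, 0 ≤ B i k * f k := by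
      intro k
      rcases hB i k with h | h <;> simp [h, hf.1 k]
    have h1 : f j ≤ ∑ k, B i k * f k := by
      have := Finset.single_le_sum (f := fun k => B i k * f k)
        (fun k _ => hterm k) (Finset.mem_univ j)
      simpa [hi] using this
    have h2 : c i ≤ ∑ i, c i :=
      Finset.single_le_sum (fun i _ => (hc i).le) (Finset.mem_univ i)
    have := hf.2 i
    simp only [hCdef]; linarith
  set L : ℝ := U f₀ with hLdef
  set δ : ℝ := Real.exp (L - ρ * Real.log C) with hδdef
  have hδpos : 0 < δ := Real.exp_pos _
  have hlogC : (0:ℝ) ≤ Real.log C := Real.log_nonneg hC1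
  -- any positive feasible f with U f ≥ L has all coordinates ≥ δ
  have hmem : ∀ f, Feasible B c f → (∀ j, 0 < f j) → L ≤ U f → ∀ j, δ ≤ f j := by
    intro f hfeas hfpos hL j
    have hlogle : ∀ k, Real.log (f k) ≤ Real.log C :=
      fun k => Real.log_le_log (hfpos k) (hfleC f hfeas k)
    have hsum : ∑ k ∈ univ.erase j, Real.log (f k) ≤ ((ρ - 1 : ℕ) : ℝ) * Real.log C := by
      calc ∑ k ∈ univ.erase j, Real.log (f k)
          ≤ ∑ _k ∈ univ.erase j, Real.log C :=
            Finset.sum_le_sum fun k _ => hlogle k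
        _ = ((univ.erase j).card : ℝ) * Real.log C := by
            rw [Finset.sum_const, nsmul_eq_mul]
        _ = ((ρ - 1 : ℕ) : ℝ) * Real.log C := by
            rw [Finset.card_erase_of_mem (mem_univ j), card_univ, Fintype.card_fin]
    have hUf : U f = ∑ k, Real.log (f k) := rfl
    rw [hUf] at hL
    have hsplit : Real.log (f j) + ∑ k ∈ univ.erase j, Real.log (f k)
        = ∑ k, Real.log (f k) :=
      Finset.add_sum_erase univ (fun k => Real.log (f k)) (mem_univ j)
    have hcast : ((ρ - 1 : ℕ) : ℝ) ≤ (ρ : ℝ) := by exact_mod_cast Nat.sub_le ρ 1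
    have hmul : ((ρ - 1 : ℕ) : ℝ) * Real.log C ≤ (ρ : ℝ) * Real.log C :=
      mul_le_mul_of_nonneg_right hcast hlogC
    have hlow : L - ρ * Real.log C ≤ Real.log (f j) := by linarith
    calc δ = Real.exp (L - ρ * Real.log C) := rfl
      _ ≤ Real.exp (Real.log (f j)) := Real.exp_le_exp.mpr hlow
      _ = f j := Real.exp_log (hfpos j)
  -- the compact search set
  set S : Set (Fin ρ → ℝ) := {f | Feasible B c f} ∩ ⋂ j, {f | δ ≤ f j} with hSdef
  have hS_mem : ∀ f, f ∈ S ↔ Feasible B c f ∧ ∀ j, δ ≤ f j := by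
    intro f; simp [hSdef, Set.mem_iInter]
  have hf₀S : f₀ ∈ S := (hS_mem f₀).mpr ⟨hf₀, hmem f₀ hf₀ hf₀pos le_rfl⟩
  have hS_closed : IsClosed S := by
    apply IsClosed.inter
    · have : {f : Fin ρ → ℝ | Feasible B c f}
          = (⋂ j, {f : Fin ρ → ℝ | 0 ≤ f j}) ∩ ⋂ i, {f : Fin ρ → ℝ | ∑ j, B i j * f j ≤ c i} := by
        ext f; simp [Feasible, Set.mem_iInter]
      rw [this]
      refine IsClosed.inter (isClosed_iInter fun j => isClosed_le continuous_const (continuous_apply j))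
        (isClosed_iInter fun i => isClosed_le ?_ continuous_const)
      exact continuous_finset_sum _ fun j _ => continuous_const.mul (continuous_apply j)
    · exact isClosed_iInter fun j => isClosed_le continuous_const (continuous_apply j)
  have hS_compact : IsCompact S := by
    refine IsCompact.of_isClosed_subset (isCompact_Icc
      (a := fun _ : Fin ρ => δ) (b := fun _ : Fin ρ => C)) hS_closed ?_
    intro f hf
    obtain ⟨hfeas, hge⟩ := (hS_mem f).mp hf
    exact Set.mem_Icc.mpr ⟨fun j => hge j, fun j => hfleC f hfeas j⟩
  have hU_cont : ContinuousOn U S := by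
    apply continuousOn_finset_sum
    intro j _
    intro x hx
    obtain ⟨hfeas, hge⟩ := (hS_mem x).mp hx
    have hc : ContinuousAt (fun f : Fin ρ → ℝ => Real.log (f j)) x :=
      ContinuousAt.log (continuous_apply j).continuousAt
        (lt_of_lt_of_le hδpos (hge j)).ne'
    exact hc.continuousWithinAt
  obtain ⟨fs, hfsS, hfsmax⟩ := hS_compact.exists_isMaxOn ⟨f₀, hf₀S⟩ hU_cont
  obtain ⟨hfs_feas, hfs_ge⟩ := (hS_mem fs).mp hfsS
  have hfs_pos : ∀ j, 0 < fs j := fun j => lt_of_lt_of_le hδpos (hfs_ge j)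
  have hf₀le : L ≤ U fs := hfsmax hf₀S
  have hPfs : P fs := by
    refine ⟨hfs_pos, hfs_feas, fun g hgpos hgfeas => ?_⟩
    rcases le_total (U g) L with h | h
    · linarith
    · exact hfsmax ((hS_mem g).mpr ⟨hgfeas, hmem g hgfeas hgpos h⟩)
  -- uniqueness of the maximizer
  have huniq : ∀ f g, P f → P g → f = g := by
    intro f g hf hg
    by_contra hne
    obtain ⟨j₀, hj₀⟩ : ∃ j, f j ≠ g j := by
      by_contra h
      push_neg at h
      exact hne (funext h)
    have hfU : U f = U g :=
      le_antisymm (hg.2.2 f hf.1 hf.2.1) (hf.2.2 g hg.1 hg.2.1)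
    set h : Fin ρ → ℝ := fun j => (f j + g j) / 2 with hhdef
    have hhpos : ∀ j, 0 < h j := fun j => by
      have h1 := hf.1 j; have h2 := hg.1 j
      show 0 < (f j + g j) / 2
      linarith
    have hhfeas : Feasible B c h := feasible_mid B c hf.2.1 hg.2.1
    have hle : ∀ j, (Real.log (f j) + Real.log (g j)) / 2 ≤ Real.log (h j) := by
      intro j
      rcases eq_or_ne (f j) (g j) with he | he
      · have hhj : h j = f j := by show (f j + g j) / 2 = f j; rw [he]; ring
        rw [hhj, he]
        linarith
      · have := strictConcaveOn_log_Ioi.2 (Set.mem_Ioi.mpr (hf.1 j))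
          (Set.mem_Ioi.mpr (hg.1 j)) he (by norm_num : (0:ℝ) < 1/2)
          (by norm_num : (0:ℝ) < 1/2) (by norm_num)
        simp only [smul_eq_mul] at this
        have h2 : h j = 1/2 * f j + 1/2 * g j := by
          show (f j + g j) / 2 = _; ring
        rw [h2]; linarith
    have hlt : (Real.log (f j₀) + Real.log (g j₀)) / 2 < Real.log (h j₀) := by
      have := strictConcaveOn_log_Ioi.2 (Set.mem_Ioi.mpr (hf.1 j₀))
        (Set.mem_Ioi.mpr (hg.1 j₀)) hj₀ (by norm_num : (0:ℝ) < 1/2)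
        (by norm_num : (0:ℝ) < 1/2) (by norm_num)
      simp only [smul_eq_mul] at this
      have h2 : h j₀ = 1/2 * f j₀ + 1/2 * g j₀ := by
        show (f j₀ + g j₀) / 2 = _; ring
      rw [h2]; linarith
    have hsumlt : (U f + U g) / 2 < U h := by
      have : ∑ j, (Real.log (f j) + Real.log (g j)) / 2 < ∑ j, Real.log (h j) :=
        Finset.sum_lt_sum (fun j _ => hle j) ⟨j₀, mem_univ j₀, hlt⟩
      calc (U f + U g) / 2 = ∑ j, (Real.log (f j) + Real.log (g j)) / 2 := by
            rw [hU]; rw [← Finset.sum_add_distrib, Finset.sum_div]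
        _ < U h := this
    have := hf.2.2 h hhpos hhfeas
    rw [hfU] at hsumlt
    linarith
  -- P ↔ ProportionallyFair
  have hPF : ∀ f, P f ↔ ProportionallyFair B c f := by
    intro f
    constructor
    · rintro ⟨hfpos, hffeas, hfmax⟩
      refine ⟨hffeas, hfpos, fun g hgfeas => ?_⟩
      set h : Fin ρ → ℝ := fun j => (f j + g j) / 2 with hhdef
      have hhfeas : Feasible B c h := feasible_mid B c hffeas hgfeas
      set d : Fin ρ → ℝ := fun j => (h j - f j) / f j with hddef
      set s : ℝ := ∑ j, d j with hsdef
      set Q : ℝ := ∑ j, (d j) ^ 2 with hQdef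
      have hQ0 : 0 ≤ Q := Finset.sum_nonneg fun j _ => sq_nonneg _
      have hd_ge : ∀ j, -(1/2 : ℝ) ≤ d j := by
        intro j
        have hfj := hfpos j
        have hgj := hgfeas.1 j
        have hne := hfj.ne'
        have hh : d j = (g j - f j) / (2 * f j) := by
          show ((f j + g j) / 2 - f j) / f j = (g j - f j) / (2 * f j)
          field_simp
          ring
        rw [hh, le_div_iff₀ (by linarith : (0:ℝ) < 2 * f j)]
        nlinarith
      -- key estimate for small t
      have hkey : ∀ t : ℝ, 0 < t → t ≤ 1 → s ≤ 2 * t * Q := by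
        intro t ht0 ht1
        set ft : Fin ρ → ℝ := fun j => f j + t * (h j - f j) with hftdef
        have hft_pos : ∀ j, 0 < ft j := by
          intro j
          have h1 := hd_ge j
          have h2 := hfpos j
          have hne := h2.ne'
          have h3 : h j - f j = d j * f j := by
            show h j - f j = (h j - f j) / f j * f j
            field_simp
          show 0 < f j + t * (h j - f j)
          rw [h3]
          nlinarith [mul_le_mul_of_nonneg_left h1 ht0.le, mul_pos h2 ht0]
        have hft_feas : Feasible B c ft := by
          refine ⟨fun j => (hft_pos j).le, fun i => ?_⟩
          have h1 := hffeas.2 i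
          have h2 := hhfeas.2 i
          have : ∑ j, B i j * ft j
              = (1 - t) * (∑ j, B i j * f j) + t * ∑ j, B i j * h j := by
            rw [Finset.mul_sum, Finset.mul_sum, ← Finset.sum_add_distrib]
            exact Finset.sum_congr rfl fun j _ => by
              show B i j * (f j + t * (h j - f j)) = _; ring
          rw [this]
          nlinarith
        have hUle : U ft ≤ U f := hfmax ft hft_pos hft_feas
        have hratio : ∀ j, ft j / f j = 1 + t * d j := by
          intro j
          have h2 := (hfpos j).ne'
          show (f j + t * (h j - f j)) / f j = 1 + t * ((h j - f j) / f j)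
          field_simp
        have h1td : ∀ j, (1/2 : ℝ) ≤ 1 + t * d j := by
          intro j
          have := hd_ge j
          nlinarith
        have hterm : ∀ j, t * d j - 2 * t ^ 2 * (d j) ^ 2
            ≤ Real.log (ft j) - Real.log (f j) := by
          intro j
          have h0 : 0 < 1 + t * d j := lt_of_lt_of_le (by norm_num) (h1td j)
          have hlog : Real.log (ft j) - Real.log (f j) = Real.log (1 + t * d j) := by
            rw [← Real.log_div (hft_pos j).ne' (hfpos j).ne', hratio j]
          rw [hlog]
          have hA : t * d j / (1 + t * d j) ≤ Real.log (1 + t * d j) :=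
            log_one_add_aux (by linarith)
          have hB' : t * d j - 2 * t ^ 2 * (d j) ^ 2 ≤ t * d j / (1 + t * d j) := by
            rw [le_div_iff₀ h0]
            have h12 := h1td j
            nlinarith [mul_nonneg (sq_nonneg (t * d j))
              (by linarith : (0:ℝ) ≤ 1 + 2 * (t * d j))]
          linarith
        have hsum : t * s - 2 * t ^ 2 * Q ≤ 0 := by
          have h1 : ∑ j, (t * d j - 2 * t ^ 2 * (d j) ^ 2)
              ≤ ∑ j, (Real.log (ft j) - Real.log (f j)) :=
            Finset.sum_le_sum fun j _ => hterm j
          have h2 : ∑ j, (Real.log (ft j) - Real.log (f j)) = U ft - U f := by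
            rw [hU, Finset.sum_sub_distrib]
          have h3 : ∑ j, (t * d j - 2 * t ^ 2 * (d j) ^ 2)
              = t * s - 2 * t ^ 2 * Q := by
            rw [hsdef, hQdef, Finset.sum_sub_distrib, Finset.mul_sum, Finset.mul_sum]
          rw [h3, h2] at h1
          linarith
        by_contra hcon
        push_neg at hcon
        have hmul := mul_lt_mul_of_pos_left hcon ht0
        nlinarith
      -- conclude s ≤ 0
      have hs0 : s ≤ 0 := by
        by_contra hs
        push_neg at hs
        set t : ℝ := min 1 (s / (4 * Q + 1)) with htdef
        have ht0 : 0 < t := lt_min one_pos (div_pos hs (by linarith))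
        have ht1 : t ≤ 1 := min_le_left _ _
        have ht2 : t * (4 * Q + 1) ≤ s := by
          have := min_le_right 1 (s / (4 * Q + 1))
          rw [htdef]
          calc min 1 (s / (4 * Q + 1)) * (4 * Q + 1)
              ≤ (s / (4 * Q + 1)) * (4 * Q + 1) := by
                apply mul_le_mul_of_nonneg_right this (by linarith)
            _ = s := by
                field_simp
        have hk := hkey t ht0 ht1
        nlinarith
      -- transfer to the goal
      have : ∑ j, (g j - f j) / f j = 2 * s := by
        rw [hsdef, Finset.mul_sum]
        refine Finset.sum_congr rfl fun j _ => ?_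
        have hne := (hfpos j).ne'
        show (g j - f j) / f j = 2 * (((f j + g j) / 2 - f j) / f j)
        field_simp
        ring
      rw [this]; linarith
    · rintro ⟨hffeas, hfpos, hineq⟩
      refine ⟨hfpos, hffeas, fun g hgpos hgfeas => ?_⟩
      have h1 : ∀ j, Real.log (g j) - Real.log (f j) ≤ (g j - f j) / f j := by
        intro j
        have h0 : 0 < g j / f j := div_pos (hgpos j) (hfpos j)
        have := Real.log_le_sub_one_of_pos h0
        rw [Real.log_div (hgpos j).ne' (hfpos j).ne'] at this
        have h2 : g j / f j - 1 = (g j - f j) / f j := by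
          rw [sub_div, div_self (hfpos j).ne']
        linarith
      have h3 : U g - U f ≤ ∑ j, (g j - f j) / f j := by
        rw [hU, ← Finset.sum_sub_distrib]
        exact Finset.sum_le_sum fun j _ => h1 j
      have h4 := hineq g hgfeas
      linarith
  constructor
  · exact ⟨fs, hPfs, fun g hg => huniq g fs hg hPfs⟩
  · refine ⟨fs, (hPF fs).mp hPfs, fun g hg => huniq g fs ((hPF g).mpr hg) hPfs⟩
end

section
/- If a vector of path flows f is proportionally fair, then every path passes through a bottleneck: for each path index j there exists a link index i with B i j = 1 and ∑_{k=1}^ρ B i k * f_k = c_i. -/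
open Finset

/-- If a vector of path flows is proportionally fair, then every path passes
through a bottleneck, i.e. a link whose total flow equals its capacity. -/
theorem proportionally_fair_every_path_through_bottleneck
    (η ρ : ℕ) (hη : 0 < η) (hρ : 0 < ρ)
    (B : Fin η → Fin ρ → ℝ) (hB : ∀ i j, B i j = 0 ∨ B i j = 1)
    (c : Fin η → ℝ) (hc : ∀ i, 0 < c i)
    (f : Fin ρ → ℝ) (hfpos : ∀ j, 0 < f j) (hffeas : Feasible B c f)
    (hpf : ∀ g : Fin ρ → ℝ, Feasible B c g → ∑ j, (g j - f j) / f j ≤ 0) :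
    ∀ j, ∃ i, B i j = 1 ∧ ∑ k, B i k * f k = c i := by
  intro j
  by_contra hcon
  push_neg at hcon
  set S : Fin η → ℝ := fun i => ∑ k, B i k * f k with hS
  have hslack : ∀ i, B i j = 1 → S i < c i := fun i hij =>
    lt_of_le_of_ne (hffeas.2 i) (hcon i hij)
  set hf : Fin η → ℝ := fun i => if B i j = 1 then c i - S i else 1 with hh
  haveI : Nonempty (Fin η) := Fin.pos_iff_nonempty.mp hη
  have hne : (Finset.univ : Finset (Fin η)).Nonempty := Finset.univ_nonempty
  set ε := Finset.univ.inf' hne hf with hε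
  have hεpos : 0 < ε := by
    rw [hε, Finset.lt_inf'_iff]
    intro i _
    simp only [hh]
    split
    · linarith [hslack i ‹_›]
    · norm_num
  set g : Fin ρ → ℝ := fun k => f k + if k = j then ε else 0 with hg
  have hgfeas : Feasible B c g := by
    constructor
    · intro k
      have := hfpos k
      by_cases hk : k = j <;> simp [hg, hk] <;> linarith [hfpos j, hεpos]
    · intro i
      have hsum : ∑ k, B i k * g k = S i + B i j * ε := by
        simp only [hg, hS, mul_add, Finset.sum_add_distrib, mul_ite, mul_zero]
        rw [Finset.sum_ite_eq' Finset.univ j (fun k => B i k * ε)]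
        simp
      rw [hsum]
      rcases hB i j with h0 | h1
      · simp only [h0, zero_mul, add_zero]
        exact hffeas.2 i
      · have hεle : ε ≤ c i - S i := by
          have h2 : hf i = c i - S i := by rw [hh]; simp [h1]
          have h3 := Finset.inf'_le hf (Finset.mem_univ i)
          rw [h2] at h3
          exact h3
        simp only [h1, one_mul]
        linarith
  have hle := hpf g hgfeas
  have hsum : ∑ k, (g k - f k) / f k = ε / f j := by
    rw [Finset.sum_eq_single j]
    · simp [hg]
    · intro k _ hk
      simp [hg, hk]
    · intro h; exact absurd (Finset.mem_univ j) h
  rw [hsum] at hle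
  have := div_pos hεpos (hfpos j)
  linarith
end

section
/- Suppose there exists a strictly feasible (Slater) point, i.e. f with f_j > 0 for all j and ∑_j B i j * f_j < c_i for all i, and suppose every path contains at least one link. Then strong duality holds: the supremum of ∑_{j=1}^ρ log(f_j) over all strictly positive feasible f equals the infimum, over all μ : Fin η → ℝ with μ i ≥ 0 and ∑_i B i j * μ_i > 0 for all j, of −∑_{j=1}^ρ log(∑_{i=1}^η B i j * μ_i) + ∑_{i=1}^η μ_i c_i − ρ. -/
open Finset

/-- Helper: a sum is at most `card * M` improved by one small term. -/
lemma sum_le_card_mul_add {α : Type*} [Fintype α] (h : α → ℝ) (M m : ℝ)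
    (hM : ∀ x, h x ≤ M) (x₀ : α) (hm : h x₀ ≤ m) :
    ∑ x, h x ≤ (Fintype.card α : ℝ) * M + (m - M) := by
  classical
  have hsplit : ∑ x, h x = h x₀ + ∑ x ∈ Finset.univ.erase x₀, h x :=
    (Finset.add_sum_erase _ _ (Finset.mem_univ _)).symm
  have hcard : (Finset.univ.erase x₀).card = Fintype.card α - 1 := by
    rw [Finset.card_erase_of_mem (Finset.mem_univ _), Finset.card_univ]
  have hpos : 1 ≤ Fintype.card α := Fintype.card_pos_iff.mpr ⟨x₀⟩
  have h2 : ∑ x ∈ Finset.univ.erase x₀, h x ≤ ((Fintype.card α : ℝ) - 1) * M := by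
    have := Finset.sum_le_card_nsmul (Finset.univ.erase x₀) h M (fun x _ => hM x)
    rw [hcard] at this
    rw [nsmul_eq_mul] at this
    have hc : ((Fintype.card α - 1 : ℕ) : ℝ) = (Fintype.card α : ℝ) - 1 := by
      push_cast [Nat.cast_sub hpos]; ring
    rw [hc] at this; exact this
  rw [hsplit]; nlinarith [hm, h2]

set_option maxHeartbeats 1600000 in
/-- Existence of a strictly feasible point satisfying the barrier stationarity
condition for parameter `t > 0`. -/
lemma exists_barrier_point (η ρ : ℕ) (hη : 0 < η) (hρ : 0 < ρ)
    (B : Fin η → Fin ρ → ℝ) (hB : ∀ i j, B i j = 0 ∨ B i j = 1)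
    (c : Fin η → ℝ) (hc : ∀ i, 0 < c i)
    (f₀ : Fin ρ → ℝ) (hf₀pos : ∀ j, 0 < f₀ j)
    (hf₀slack : ∀ i, ∑ j, B i j * f₀ j < c i)
    (hlink : ∀ j, ∃ i, B i j = 1) (t : ℝ) (ht : 0 < t) :
    ∃ f : Fin ρ → ℝ, (∀ j, 0 < f j) ∧ (∀ i, ∑ j, B i j * f j < c i) ∧
      ∀ j, t * ∑ i, B i j / (c i - ∑ j', B i j' * f j') = (f j)⁻¹ := by
  classical
  have : NeZero η := ⟨hη.ne'⟩
  have : NeZero ρ := ⟨hρ.ne'⟩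
  have hBnn : ∀ i j, (0:ℝ) ≤ B i j := by
    intro i j; rcases hB i j with h | h <;> simp [h]
  -- constants
  set C : ℝ := 1 + ∑ i, c i with hCdef
  have hcsum : (0:ℝ) ≤ ∑ i, c i := Finset.sum_nonneg fun i _ => (hc i).le
  have hC1 : (1:ℝ) ≤ C := by simp only [hCdef]; linarith
  have hC0 : (0:ℝ) < C := lt_of_lt_of_le one_pos hC1
  have hcC : ∀ i, c i < C := by
    intro i
    have := Finset.single_le_sum (f := c) (fun i _ => (hc i).le) (Finset.mem_univ i)
    simp only [hCdef]; linarith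
  -- the barrier objective
  set g : (Fin ρ → ℝ) → ℝ := fun f =>
    ∑ j, Real.log (f j) + t * ∑ i, Real.log (c i - ∑ j, B i j * f j) with hgdef
  set L : ℝ := g f₀ with hLdef
  set m : ℝ := min 1 t with hmdef
  have hm : 0 < m := lt_min one_pos ht
  have hm1 : m ≤ 1 := min_le_left _ _
  have hmt : m ≤ t := min_le_right _ _
  -- threshold δ
  have huρ : (Finset.univ : Finset (Fin ρ)).Nonempty := Finset.univ_nonempty
  have huη : (Finset.univ : Finset (Fin η)).Nonempty := Finset.univ_nonempty
  set b₁ : ℝ := Finset.univ.inf' huρ f₀ with hb₁def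
  set b₂ : ℝ := Finset.univ.inf' huη (fun i => c i - ∑ j, B i j * f₀ j) with hb₂def
  have hb₁pos : 0 < b₁ := by
    rw [hb₁def, Finset.lt_inf'_iff]; exact fun j _ => hf₀pos j
  have hb₂pos : 0 < b₂ := by
    rw [hb₂def, Finset.lt_inf'_iff]; intro i _; linarith [hf₀slack i]
  set r : ℝ := Real.exp (Real.log C + (L - ((ρ:ℝ) + t * η) * Real.log C) / m) with hrdef
  have hrpos : 0 < r := Real.exp_pos _
  set δ : ℝ := min (min 1 (min b₁ b₂)) r / 2 with hδdef
  have hδpos : 0 < δ := by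
    rw [hδdef]
    have : 0 < min (min 1 (min b₁ b₂)) r :=
      lt_min (lt_min one_pos (lt_min hb₁pos hb₂pos)) hrpos
    linarith
  have hδ1 : δ < 1 := by
    have h1 : min (min 1 (min b₁ b₂)) r ≤ 1 := le_trans (min_le_left _ _) (min_le_left _ _)
    rw [hδdef]; linarith
  have hδb₁ : δ < b₁ := by
    have h1 : min (min 1 (min b₁ b₂)) r ≤ b₁ :=
      le_trans (min_le_left _ _) (le_trans (min_le_right _ _) (min_le_left _ _))
    rw [hδdef]; linarith
  have hδb₂ : δ < b₂ := by
    have h1 : min (min 1 (min b₁ b₂)) r ≤ b₂ :=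
      le_trans (min_le_left _ _) (le_trans (min_le_right _ _) (min_le_right _ _))
    rw [hδdef]; linarith
  have hδr : δ < r := by
    have h1 : min (min 1 (min b₁ b₂)) r ≤ r := min_le_right _ _
    rw [hδdef]; linarith
  have hδC : δ ≤ C := le_of_lt (lt_of_lt_of_le hδ1 hC1)
  have hlogδC : Real.log δ - Real.log C ≤ 0 := by
    have h1 : Real.log δ ≤ 0 := Real.log_nonpos hδpos.le hδ1.le
    have h2 : 0 ≤ Real.log C := Real.log_nonneg hC1
    linarith
  clear_value C L m b₁ b₂ r δ
  -- the key numerical inequality from δ < r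
  have hkey : ((ρ:ℝ) + t * η) * Real.log C + m * (Real.log δ - Real.log C) < L := by
    have h1 : Real.log δ < Real.log C + (L - ((ρ:ℝ) + t * η) * Real.log C) / m := by
      calc Real.log δ < Real.log r := Real.log_lt_log hδpos hδr
        _ = _ := by rw [hrdef, Real.log_exp]
    have h2 : m * (Real.log δ - Real.log C) < L - ((ρ:ℝ) + t * η) * Real.log C := by
      have h1' := (mul_lt_mul_iff_right₀ hm).mpr h1
      have h3 : m * (Real.log C + (L - ((ρ:ℝ) + t * η) * Real.log C) / m)
          = m * Real.log C + (L - ((ρ:ℝ) + t * η) * Real.log C) := by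
        field_simp
      have h4 : m * (Real.log δ - Real.log C) = m * Real.log δ - m * Real.log C := by ring
      linarith
    linarith
  -- compact set K
  set K : Set (Fin ρ → ℝ) := {f | (∀ j, δ/2 ≤ f j ∧ f j ≤ C) ∧
      ∀ i, ∑ j, B i j * f j ≤ c i - δ/2} with hKdef
  -- basic facts about members of K
  have hKpos : ∀ f ∈ K, ∀ j, 0 < f j := fun f hf j => lt_of_lt_of_le (by linarith) (hf.1 j).1
  have hKslackpos : ∀ f ∈ K, ∀ i, 0 < c i - ∑ j, B i j * f j := by
    intro f hf i; have := hf.2 i; linarith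
  have hKsumnn : ∀ f ∈ K, ∀ i, 0 ≤ ∑ j, B i j * f j := by
    intro f hf i
    exact Finset.sum_nonneg fun j _ => mul_nonneg (hBnn i j) (hKpos f hf j).le
  have hKslackC : ∀ f ∈ K, ∀ i, c i - ∑ j, B i j * f j ≤ C := by
    intro f hf i; have := hKsumnn f hf i; linarith [hcC i]
  have hf₀K : f₀ ∈ K := by
    constructor
    · intro j
      constructor
      · have : b₁ ≤ f₀ j := by
          rw [hb₁def]; exact Finset.inf'_le _ (Finset.mem_univ j)
        linarith
      · obtain ⟨i, hi⟩ := hlink j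
        have h1 : f₀ j ≤ ∑ j', B i j' * f₀ j' := by
          have := Finset.single_le_sum (f := fun j' => B i j' * f₀ j')
            (fun j' _ => mul_nonneg (hBnn i j') (hf₀pos j').le) (Finset.mem_univ j)
          simpa [hi] using this
        linarith [hf₀slack i, hcC i]
    · intro i
      have : b₂ ≤ c i - ∑ j, B i j * f₀ j := by
        rw [hb₂def]; exact Finset.inf'_le _ (Finset.mem_univ i)
      linarith
  -- K is compact
  have hKcompact : IsCompact K := by
    have heq : K = (Set.Icc (fun _ => δ/2) (fun _ => C)) ∩
        ⋂ i, {f : Fin ρ → ℝ | ∑ j, B i j * f j ≤ c i - δ/2} := by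
      ext f
      simp only [hKdef, Set.mem_setOf_eq, Set.mem_inter_iff, Set.mem_Icc, Set.mem_iInter,
        Pi.le_def]
      constructor
      · rintro ⟨h1, h2⟩; exact ⟨⟨fun j => (h1 j).1, fun j => (h1 j).2⟩, h2⟩
      · rintro ⟨⟨h1, h2⟩, h3⟩; exact ⟨fun j => ⟨h1 j, h2 j⟩, h3⟩
    rw [heq]
    exact isCompact_Icc.inter_right (isClosed_iInter fun i =>
      isClosed_le (continuous_finset_sum _
        (fun j _ => continuous_const.mul (continuous_apply j))) continuous_const)
  -- g is continuous on K
  have hgcont : ContinuousOn g K := by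
    apply ContinuousOn.add
    · apply continuousOn_finset_sum
      intro j _
      exact ContinuousOn.log (continuous_apply j).continuousOn
        (fun f hf => ne_of_gt (hKpos f hf j))
    · apply ContinuousOn.mul continuousOn_const
      apply continuousOn_finset_sum
      intro i _
      exact ContinuousOn.log
        ((continuous_const.sub (continuous_finset_sum _
          (fun j _ => continuous_const.mul (continuous_apply j)))).continuousOn)
        (fun f hf => ne_of_gt (hKslackpos f hf i))
  -- maximizer
  obtain ⟨fs, hfsK, hfsmax⟩ := hKcompact.exists_isMaxOn ⟨f₀, hf₀K⟩ hgcont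
  have hLle : L ≤ g fs := hLdef ▸ hfsmax hf₀K
  -- boundary bound: any point of K touching level δ has value < L
  have hbound : ∀ f ∈ K, ((∃ j, f j ≤ δ) ∨ (∃ i, c i - ∑ j, B i j * f j ≤ δ)) →
      g f < L := by
    intro f hf hcase
    have hlogC : ∀ j, Real.log (f j) ≤ Real.log C := fun j =>
      Real.log_le_log (hKpos f hf j) (hf.1 j).2
    have hlogsC : ∀ i, Real.log (c i - ∑ j, B i j * f j) ≤ Real.log C := fun i =>
      Real.log_le_log (hKslackpos f hf i) (hKslackC f hf i)
    rcases hcase with ⟨j₀, hj₀⟩ | ⟨i₀, hi₀⟩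
    · have h1 : ∑ j, Real.log (f j) ≤ (ρ:ℝ) * Real.log C + (Real.log δ - Real.log C) := by
        have := sum_le_card_mul_add (fun j => Real.log (f j)) (Real.log C) (Real.log δ)
          hlogC j₀ (Real.log_le_log (hKpos f hf j₀) hj₀)
        simpa using this
      have h2 : ∑ i, Real.log (c i - ∑ j, B i j * f j) ≤ (η:ℝ) * Real.log C := by
        have := Finset.sum_le_card_nsmul Finset.univ
          (fun i => Real.log (c i - ∑ j, B i j * f j)) (Real.log C) (fun i _ => hlogsC i)
        simpa [nsmul_eq_mul, mul_comm] using this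
      have h3 : g f ≤ ((ρ:ℝ) + t * η) * Real.log C + (Real.log δ - Real.log C) := by
        have h2' := mul_le_mul_of_nonneg_left h2 ht.le
        have hexp : ((ρ:ℝ) + t * η) * Real.log C + (Real.log δ - Real.log C)
            = ((ρ:ℝ) * Real.log C + (Real.log δ - Real.log C)) + t * ((η:ℝ) * Real.log C) := by
          ring
        simp only [hgdef]
        linarith
      have h4 : Real.log δ - Real.log C ≤ m * (Real.log δ - Real.log C) := by
        nlinarith
      linarith [hkey]
    · have h1 : ∑ j, Real.log (f j) ≤ (ρ:ℝ) * Real.log C := by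
        have := Finset.sum_le_card_nsmul Finset.univ
          (fun j => Real.log (f j)) (Real.log C) (fun j _ => hlogC j)
        simpa [nsmul_eq_mul, mul_comm] using this
      have h2 : ∑ i, Real.log (c i - ∑ j, B i j * f j)
          ≤ (η:ℝ) * Real.log C + (Real.log δ - Real.log C) := by
        have := sum_le_card_mul_add (fun i => Real.log (c i - ∑ j, B i j * f j))
          (Real.log C) (Real.log δ) hlogsC i₀
          (Real.log_le_log (hKslackpos f hf i₀) hi₀)
        simpa using this
      have h3 : g f ≤ ((ρ:ℝ) + t * η) * Real.log C + t * (Real.log δ - Real.log C) := by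
        have h2' := mul_le_mul_of_nonneg_left h2 ht.le
        have hexp : t * ((η:ℝ) * Real.log C + (Real.log δ - Real.log C))
            = t * ((η:ℝ) * Real.log C) + t * (Real.log δ - Real.log C) := by ring
        have hexp2 : ((ρ:ℝ) + t * η) * Real.log C
            = (ρ:ℝ) * Real.log C + t * ((η:ℝ) * Real.log C) := by ring
        simp only [hgdef]
        linarith
      have h4 : t * (Real.log δ - Real.log C) ≤ m * (Real.log δ - Real.log C) := by
        nlinarith
      linarith [hkey]
  -- fs is strictly inside
  have hfs1 : ∀ j, δ < fs j := by
    intro j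
    by_contra h
    push_neg at h
    exact absurd hLle (not_le.mpr (hbound fs hfsK (Or.inl ⟨j, h⟩)))
  have hfs2 : ∀ i, ∑ j, B i j * fs j < c i - δ := by
    intro i
    by_contra h
    push_neg at h
    exact absurd hLle (not_le.mpr (hbound fs hfsK (Or.inr ⟨i, by linarith⟩)))
  have hfspos : ∀ j, 0 < fs j := fun j => lt_trans hδpos (hfs1 j)
  have hfsslack : ∀ i, 0 < c i - ∑ j, B i j * fs j := fun i => by linarith [hfs2 i]
  -- open neighbourhood inside K
  set U : Set (Fin ρ → ℝ) := {f | (∀ j, δ < f j) ∧ ∀ i, ∑ j, B i j * f j < c i - δ/2}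
    with hUdef
  have hUopen : IsOpen U := by
    have h1 : U = (⋂ j, {f : Fin ρ → ℝ | δ < f j}) ∩
        ⋂ i, {f : Fin ρ → ℝ | ∑ j, B i j * f j < c i - δ/2} := by
      ext f; simp only [hUdef, Set.mem_setOf_eq, Set.mem_inter_iff, Set.mem_iInter]
    rw [h1]
    exact IsOpen.inter
      (isOpen_iInter_of_finite fun j => isOpen_lt continuous_const (continuous_apply j))
      (isOpen_iInter_of_finite fun i => isOpen_lt (continuous_finset_sum _
        (fun j _ => continuous_const.mul (continuous_apply j))) continuous_const)
  have hUK : U ⊆ K := by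
    intro f hf
    obtain ⟨h1, h2⟩ := hf
    have hfpos : ∀ j, 0 < f j := fun j => lt_trans hδpos (h1 j)
    constructor
    · intro j
      refine ⟨by linarith [h1 j], ?_⟩
      obtain ⟨i, hi⟩ := hlink j
      have hle : f j ≤ ∑ j', B i j' * f j' := by
        have := Finset.single_le_sum (f := fun j' => B i j' * f j')
          (fun j' _ => mul_nonneg (hBnn i j') (hfpos j').le) (Finset.mem_univ j)
        simpa [hi] using this
      linarith [h2 i, hcC i, hδpos]
    · intro i; linarith [h2 i]
  have hfsU : fs ∈ U :=
    ⟨hfs1, fun i => by linarith [hfs2 i, hδpos]⟩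
  have hloc : IsLocalMax g fs :=
    hfsmax.isLocalMax (Filter.mem_of_superset (hUopen.mem_nhds hfsU) hUK)
  refine ⟨fs, hfspos, fun i => by linarith [hfs2 i, hδpos], ?_⟩
  -- stationarity via one-dimensional slices
  intro j
  set A : Fin η → ℝ := fun i => ∑ j' ∈ Finset.univ.erase j, B i j' * fs j' with hAdef
  set K₀ : ℝ := ∑ j' ∈ Finset.univ.erase j, Real.log (fs j') with hK₀def
  set ψ : ℝ → ℝ := fun x =>
    Real.log x + K₀ + t * ∑ i, Real.log (c i - (B i j * x + A i)) with hψdef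
  have hslackeq : ∀ i, B i j * fs j + A i = ∑ j', B i j' * fs j' := by
    intro i
    simp only [hAdef]
    exact Finset.add_sum_erase _ (fun j' => B i j' * fs j') (Finset.mem_univ j)
  have heq : ∀ x, g (Function.update fs j x) = ψ x := by
    intro x
    have h1 : ∑ j', Real.log (Function.update fs j x j') = Real.log x + K₀ := by
      rw [← Finset.add_sum_erase Finset.univ
        (fun j' => Real.log (Function.update fs j x j')) (Finset.mem_univ j),
        Function.update_self]
      congr 1
      exact Finset.sum_congr rfl fun j' hj' => by
        rw [Function.update_of_ne (Finset.ne_of_mem_erase hj')]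
    have h2 : ∀ i, ∑ j', B i j' * Function.update fs j x j' = B i j * x + A i := by
      intro i
      rw [← Finset.add_sum_erase Finset.univ
        (fun j' => B i j' * Function.update fs j x j') (Finset.mem_univ j),
        Function.update_self]
      congr 1
      exact Finset.sum_congr rfl fun j' hj' => by
        rw [Function.update_of_ne (Finset.ne_of_mem_erase hj')]
    simp only [hgdef, hψdef, h1]
    congr 1
    congr 1
    exact Finset.sum_congr rfl fun i _ => by rw [h2 i]
  have htend : Filter.Tendsto (fun x => Function.update fs j x) (nhds (fs j)) (nhds fs) := by
    rw [tendsto_pi_nhds]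
    intro j'
    by_cases h : j' = j
    · subst h; simp only [Function.update_self]; exact Filter.tendsto_id
    · simpa [Function.update_of_ne h] using tendsto_const_nhds
  have hψloc : IsLocalMax ψ (fs j) := by
    have hev := htend.eventually hloc
    have hψfs : ψ (fs j) = g fs := by rw [← heq, Function.update_eq_self]
    filter_upwards [hev] with x hx
    rw [hψfs, ← heq x]; exact hx
  have hder : HasDerivAt ψ
      ((fs j)⁻¹ + t * ∑ i, -B i j / (c i - ∑ j', B i j' * fs j')) (fs j) := by
    have h1 : HasDerivAt Real.log (fs j)⁻¹ (fs j) := Real.hasDerivAt_log (ne_of_gt (hfspos j))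
    have h2 : ∀ i : Fin η, HasDerivAt (fun x => Real.log (c i - (B i j * x + A i)))
        (-B i j / (c i - ∑ j', B i j' * fs j')) (fs j) := by
      intro i
      have hu : HasDerivAt (fun x => c i - (B i j * x + A i)) (-B i j) (fs j) := by
        have h3 := (((hasDerivAt_id (fs j)).const_mul (B i j)).add_const (A i)).const_sub (c i)
        simpa using h3
      have hne : c i - (B i j * fs j + A i) ≠ 0 := by
        rw [hslackeq i]; exact ne_of_gt (hfsslack i)
      have h4 := hu.log hne
      rw [hslackeq i] at h4
      exact h4
    have hsum : HasDerivAt (fun x => ∑ i, Real.log (c i - (B i j * x + A i)))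
        (∑ i, -B i j / (c i - ∑ j', B i j' * fs j')) (fs j) :=
      HasDerivAt.fun_sum fun i _ => h2 i
    exact (h1.add_const K₀).add (hsum.const_mul t)
  have hzero := hψloc.hasDerivAt_eq_zero hder
  have hsumneg : ∑ i, -B i j / (c i - ∑ j', B i j' * fs j')
      = -∑ i, B i j / (c i - ∑ j', B i j' * fs j') := by
    rw [← Finset.sum_neg_distrib]
    exact Finset.sum_congr rfl fun i _ => neg_div _ _
  rw [hsumneg] at hzero
  have : t * ∑ i, B i j / (c i - ∑ j', B i j' * fs j') = (fs j)⁻¹ := by linarith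
  exact this

/-- Strong duality: under a Slater condition, the supremum of the primal
log-utility over strictly positive feasible flows equals the infimum of the
dual objective over nonnegative link prices whose path aggregates are
positive. -/
theorem strong_duality_proportional_fairness
    (η ρ : ℕ) (hη : 0 < η) (hρ : 0 < ρ)
    (B : Fin η → Fin ρ → ℝ) (hB : ∀ i j, B i j = 0 ∨ B i j = 1)
    (c : Fin η → ℝ) (hc : ∀ i, 0 < c i)
    (hslater : ∃ f : Fin ρ → ℝ, (∀ j, 0 < f j) ∧ ∀ i, ∑ j, B i j * f j < c i)
    (hlink : ∀ j, ∃ i, B i j = 1) :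
    sSup {v : ℝ | ∃ f : Fin ρ → ℝ, (∀ j, 0 < f j) ∧ Feasible B c f ∧
        v = ∑ j, Real.log (f j)} =
      sInf {v : ℝ | ∃ μ : Fin η → ℝ, (∀ i, 0 ≤ μ i) ∧
        (∀ j, 0 < ∑ i, B i j * μ i) ∧
        v = -(∑ j, Real.log (∑ i, B i j * μ i)) + ∑ i, μ i * c i - (ρ : ℝ)} := by
  classical
  set S : Set ℝ := {v : ℝ | ∃ f : Fin ρ → ℝ, (∀ j, 0 < f j) ∧ Feasible B c f ∧
      v = ∑ j, Real.log (f j)} with hS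
  set D : Set ℝ := {v : ℝ | ∃ μ : Fin η → ℝ, (∀ i, 0 ≤ μ i) ∧
      (∀ j, 0 < ∑ i, B i j * μ i) ∧
      v = -(∑ j, Real.log (∑ i, B i j * μ i)) + ∑ i, μ i * c i - (ρ : ℝ)} with hD
  obtain ⟨f₀, hf₀pos, hf₀slack⟩ := hslater
  have hBnn : ∀ i j, (0:ℝ) ≤ B i j := by
    intro i j; rcases hB i j with h | h <;> simp [h]
  -- S nonempty
  have hSne : S.Nonempty :=
    ⟨_, f₀, hf₀pos, ⟨fun j => (hf₀pos j).le, fun i => (hf₀slack i).le⟩, rfl⟩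
  -- D nonempty
  have hDne : D.Nonempty := by
    refine ⟨_, fun _ => 1, fun _ => zero_le_one, fun j => ?_, rfl⟩
    obtain ⟨i, hi⟩ := hlink j
    have : (1:ℝ) ≤ ∑ i, B i j * 1 := by
      have := Finset.single_le_sum (f := fun i => B i j * 1)
        (fun i _ => by simpa using hBnn i j) (Finset.mem_univ i)
      simpa [hi] using this
    linarith
  -- weak duality
  have weak : ∀ v ∈ S, ∀ w ∈ D, v ≤ w := by
    rintro v ⟨f, hfpos, ⟨hfnn, hfcap⟩, rfl⟩ w ⟨μ, hμnn, hq, rfl⟩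
    set q : Fin ρ → ℝ := fun j => ∑ i, B i j * μ i with hqdef
    have key1 : ∀ j, Real.log (f j) = Real.log (f j * q j) - Real.log (q j) := by
      intro j
      rw [Real.log_mul (ne_of_gt (hfpos j)) (ne_of_gt (hq j))]; ring
    have key2 : ∑ j, Real.log (f j * q j) ≤ ∑ j, f j * q j - (ρ : ℝ) := by
      have : ∀ j : Fin ρ, Real.log (f j * q j) ≤ f j * q j - 1 := fun j =>
        Real.log_le_sub_one_of_pos (mul_pos (hfpos j) (hq j))
      calc ∑ j, Real.log (f j * q j) ≤ ∑ j, (f j * q j - 1) :=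
            Finset.sum_le_sum (fun j _ => this j)
        _ = ∑ j, f j * q j - (ρ : ℝ) := by
            rw [Finset.sum_sub_distrib]; simp
    have key3 : ∑ j, f j * q j ≤ ∑ i, μ i * c i := by
      have swap : ∑ j, f j * q j = ∑ i, μ i * ∑ j, B i j * f j := by
        simp only [hqdef, Finset.mul_sum, Finset.sum_mul]
        rw [Finset.sum_comm]
        exact Finset.sum_congr rfl fun i _ => Finset.sum_congr rfl fun j _ => by ring
      rw [swap]
      exact Finset.sum_le_sum fun i _ => mul_le_mul_of_nonneg_left (hfcap i) (hμnn i)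
    have : ∑ j, Real.log (f j) = ∑ j, Real.log (f j * q j) - ∑ j, Real.log (q j) := by
      rw [← Finset.sum_sub_distrib]; exact Finset.sum_congr rfl fun j _ => key1 j
    rw [this]
    have := key2.trans (by linarith : ∑ j, f j * q j - (ρ:ℝ) ≤ ∑ i, μ i * c i - (ρ:ℝ))
    linarith
  have hbddS : BddAbove S := by
    obtain ⟨w, hw⟩ := hDne
    exact ⟨w, fun v hv => weak v hv w hw⟩
  have hbddD : BddBelow D := by
    obtain ⟨v, hv⟩ := hSne
    exact ⟨v, fun w hw => weak v hv w hw⟩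
  apply le_antisymm
  · exact csSup_le hSne fun v hv => le_csInf hDne fun w hw => weak v hv w hw
  · apply le_of_forall_pos_le_add
    intro ε hε
    set t : ℝ := ε / η with htdef
    have ht : 0 < t := div_pos hε (by exact_mod_cast hη)
    obtain ⟨f, hfpos, hfslack, hstat⟩ :=
      exists_barrier_point η ρ hη hρ B hB c hc f₀ hf₀pos hf₀slack hlink t ht
    set s : Fin η → ℝ := fun i => c i - ∑ j, B i j * f j with hsdef
    have hspos : ∀ i, 0 < s i := fun i => by
      simp only [hsdef]; linarith [hfslack i]
    set μ : Fin η → ℝ := fun i => t / s i with hμdef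
    have hμpos : ∀ i, 0 < μ i := fun i => div_pos ht (hspos i)
    have hqeq : ∀ j, ∑ i, B i j * μ i = (f j)⁻¹ := by
      intro j
      rw [← hstat j, Finset.mul_sum]
      exact Finset.sum_congr rfl fun i _ => by
        simp only [hμdef, hsdef]; ring
    have hqpos : ∀ j, 0 < ∑ i, B i j * μ i := fun j => by
      rw [hqeq j]; exact inv_pos.mpr (hfpos j)
    -- dual value
    have hμc : ∑ i, μ i * c i = t * η + (ρ : ℝ) := by
      have hterm : ∀ i, μ i * c i = t + μ i * ∑ j, B i j * f j := by
        intro i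
        have : μ i * s i = t := by
          simp only [hμdef]
          rw [div_mul_cancel₀ _ (ne_of_gt (hspos i))]
        simp only [hsdef] at this
        nlinarith [this]
      rw [Finset.sum_congr rfl fun i _ => hterm i, Finset.sum_add_distrib]
      have h1 : ∑ _i : Fin η, t = t * η := by
        simp [Finset.sum_const, mul_comm]
      have h2 : ∑ i, μ i * ∑ j, B i j * f j = (ρ : ℝ) := by
        have swap : ∑ i, μ i * ∑ j, B i j * f j = ∑ j, f j * ∑ i, B i j * μ i := by
          simp only [Finset.mul_sum]
          rw [Finset.sum_comm]
          exact Finset.sum_congr rfl fun j _ => Finset.sum_congr rfl fun i _ => by ring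
        rw [swap]
        have : ∀ j : Fin ρ, f j * ∑ i, B i j * μ i = 1 := by
          intro j; rw [hqeq j]; exact mul_inv_cancel₀ (ne_of_gt (hfpos j))
        rw [Finset.sum_congr rfl fun j _ => this j]; simp
      rw [h1, h2]
    have hlogq : ∑ j, Real.log (∑ i, B i j * μ i) = -∑ j, Real.log (f j) := by
      rw [← Finset.sum_neg_distrib]
      exact Finset.sum_congr rfl fun j _ => by rw [hqeq j, Real.log_inv]
    set w : ℝ := -(∑ j, Real.log (∑ i, B i j * μ i)) + ∑ i, μ i * c i - (ρ : ℝ) with hwdef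
    have hwD : w ∈ D := ⟨μ, fun i => (hμpos i).le, hqpos, rfl⟩
    have hvS : (∑ j, Real.log (f j)) ∈ S :=
      ⟨f, hfpos, ⟨fun j => (hfpos j).le, fun i => (hfslack i).le⟩, rfl⟩
    have hweq : w = ∑ j, Real.log (f j) + ε := by
      rw [hwdef, hlogq, hμc]
      have : t * η = ε := by
        rw [htdef]; field_simp
      rw [this]; ring
    calc sInf D ≤ w := csInf_le hbddD hwD
      _ = ∑ j, Real.log (f j) + ε := hweq
      _ ≤ sSup S + ε := by
          have := le_csSup hbddS hvS; linarith
end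

section
/- Suppose there exists a strictly feasible point (f with f_j > 0 for all j and ∑_j B i j * f_j < c_i for all i), every path contains at least one link, and f* is the strictly positive feasible maximizer of ∑_{j=1}^ρ log(f_j) over strictly positive feasible vectors. Then there exist Lagrange multipliers μ* : Fin η → ℝ with μ*_i ≥ 0 for all i such that (a) f*_j = 1/(∑_{i=1}^η B i j * μ*_i) for every path j, and (b) complementary slackness holds: μ*_i · (c_i − ∑_{j=1}^ρ B i j * f*_j) = 0 for every link i; in particular μ*_i > 0 only if link i is saturated. -/
open Finset

open Filter Topology

variable {ρ : ℕ}

/-- Dot product on `Fin ρ → ℝ`. -/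
def dotp (x y : Fin ρ → ℝ) : ℝ := ∑ j, x j * y j

lemma dotp_self_nonneg (x : Fin ρ → ℝ) : 0 ≤ dotp x x :=
  Finset.sum_nonneg fun j _ => mul_self_nonneg _

lemma eq_zero_of_dotp_self_nonpos {x : Fin ρ → ℝ} (h : dotp x x ≤ 0) : x = 0 := by
  have h0 : dotp x x = 0 := le_antisymm h (dotp_self_nonneg x)
  funext j
  have := (Finset.sum_eq_zero_iff_of_nonneg (fun j _ => mul_self_nonneg (x j))).1 h0 j (mem_univ j)
  exact mul_self_eq_zero.1 this

/-- Algebraic Farkas lemma. -/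
lemma farkas {ι : Type} [DecidableEq ι] (s : Finset ι) :
    ∀ (v : ι → Fin ρ → ℝ) (g : Fin ρ → ℝ),
      (∀ d : Fin ρ → ℝ, (∀ i ∈ s, dotp (v i) d ≤ 0) → dotp g d ≤ 0) →
      ∃ μ : ι → ℝ, (∀ i, 0 ≤ μ i) ∧ ∀ j, g j = ∑ i ∈ s, μ i * v i j := by
  induction s using Finset.cons_induction with
  | empty =>
    intro v g H
    have : g = 0 := eq_zero_of_dotp_self_nonpos (H g (by simp))
    exact ⟨0, fun i => le_rfl, by simp [this]⟩
  | cons a s ha IH =>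
    intro v g H
    by_cases hA : ∀ d : Fin ρ → ℝ, (∀ i ∈ s, dotp (v i) d ≤ 0) → dotp g d ≤ 0
    · obtain ⟨μ, hμ, hg⟩ := IH v g hA
      refine ⟨fun i => if i = a then 0 else μ i, fun i => ?_, fun j => ?_⟩
      · dsimp only; split <;> [exact le_rfl; exact hμ i]
      · rw [Finset.sum_cons]
        dsimp only
        rw [if_pos rfl, hg j]
        simp only [zero_mul, zero_add]
        exact Finset.sum_congr rfl fun i hi => by
          rw [if_neg]; rintro rfl; exact ha hi
    · push_neg at hA
      obtain ⟨d₀, hd₀, hgd₀⟩ := hA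
      set t : ℝ := dotp (v a) d₀ with ht
      have htpos : 0 < t := by
        by_contra hle
        push_neg at hle
        have := H d₀ (by
          intro i hi
          rcases Finset.mem_cons.1 hi with rfl | hi
          · exact hle
          · exact hd₀ i hi)
        linarith
      set u : ι → Fin ρ → ℝ := fun i j => t * v i j - dotp (v i) d₀ * v a j with hu
      set h : Fin ρ → ℝ := fun j => t * g j - dotp g d₀ * v a j with hh
      have key : ∀ d : Fin ρ → ℝ, (∀ i ∈ s, dotp (u i) d ≤ 0) → dotp h d ≤ 0 := by
        intro d hd
        set d' : Fin ρ → ℝ := fun j => t * d j - dotp (v a) d * d₀ j with hd'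
        have expand : ∀ x : Fin ρ → ℝ, dotp x d' = t * dotp x d - dotp (v a) d * dotp x d₀ := by
          intro x
          simp only [dotp, hd', mul_sub, Finset.mul_sum, ← Finset.sum_sub_distrib]
          exact Finset.sum_congr rfl fun j _ => by ring
        have expandu : ∀ x : Fin ρ → ℝ,
            dotp (fun j => t * x j - dotp x d₀ * v a j) d
              = t * dotp x d - dotp x d₀ * dotp (v a) d := by
          intro x
          simp only [dotp, mul_sub, Finset.mul_sum, ← Finset.sum_sub_distrib]
          exact Finset.sum_congr rfl fun j _ => by ring
        have hgd' := H d' (by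
          intro i hi
          rcases Finset.mem_cons.1 hi with rfl | hi
          · rw [expand, ← ht]; exact le_of_eq (by ring)
          · rw [expand]
            have := hd i hi
            rw [hu] at this
            rw [expandu (v i)] at this
            linarith)
        rw [expand] at hgd'
        rw [hh, expandu g]
        linarith
      obtain ⟨ν, hν, hhg⟩ := IH u h key
      refine ⟨fun i => if i = a then (dotp g d₀ - ∑ i ∈ s, ν i * dotp (v i) d₀) / t else ν i,
        ?_, ?_⟩
      · intro i
        dsimp only
        by_cases hia : i = a
        · rw [if_pos hia]
          apply div_nonneg _ htpos.le
          have : ∑ i ∈ s, ν i * dotp (v i) d₀ ≤ 0 :=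
            Finset.sum_nonpos fun i hi => mul_nonpos_of_nonneg_of_nonpos (hν i) (hd₀ i hi)
          linarith
        · rw [if_neg hia]; exact hν i
      · intro j
        rw [Finset.sum_cons]
        dsimp only
        rw [if_pos rfl]
        have hsum : ∀ i ∈ s, (if i = a then (dotp g d₀ - ∑ i ∈ s, ν i * dotp (v i) d₀) / t
            else ν i) * v i j = ν i * v i j := by
          intro i hi
          rw [if_neg]; rintro rfl; exact ha hi
        rw [Finset.sum_congr rfl hsum]
        have h1 := hhg j
        rw [hh, hu] at h1
        simp only at h1
        have h2 : ∑ i ∈ s, ν i * (t * v i j - dotp (v i) d₀ * v a j)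
            = t * ∑ i ∈ s, ν i * v i j - (∑ i ∈ s, ν i * dotp (v i) d₀) * v a j := by
          rw [Finset.mul_sum, Finset.sum_mul, ← Finset.sum_sub_distrib]
          exact Finset.sum_congr rfl fun i _ => by ring
        rw [h2] at h1
        have htne : t ≠ 0 := ne_of_gt htpos
        field_simp
        linarith [h1]

/-- Under a Slater condition, for the strictly positive feasible maximizer of
the log-utility there exist nonnegative Lagrange multipliers `μ*` such that
`f* j = 1 / (∑ i, B i j * μ* i)` and complementary slackness holds; in
particular `μ* i > 0` only if link `i` is saturated. -/
theorem kkt_multipliers_for_log_utility_maximizer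
    (η ρ : ℕ) (hη : 0 < η) (hρ : 0 < ρ)
    (B : Fin η → Fin ρ → ℝ) (hB : ∀ i j, B i j = 0 ∨ B i j = 1)
    (c : Fin η → ℝ) (hc : ∀ i, 0 < c i)
    (hslater : ∃ f : Fin ρ → ℝ, (∀ j, 0 < f j) ∧ ∀ i, ∑ j, B i j * f j < c i)
    (hlink : ∀ j, ∃ i, B i j = 1)
    (f : Fin ρ → ℝ) (hfpos : ∀ j, 0 < f j) (hffeas : Feasible B c f)
    (hmax : ∀ g : Fin ρ → ℝ, (∀ j, 0 < g j) → Feasible B c g →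
      ∑ j, Real.log (g j) ≤ ∑ j, Real.log (f j)) :
    ∃ μ : Fin η → ℝ, (∀ i, 0 ≤ μ i) ∧
      (∀ j, f j = (1 : ℝ) / ∑ i, B i j * μ i) ∧
      (∀ i, μ i * (c i - ∑ j, B i j * f j) = 0) ∧
      (∀ i, 0 < μ i → ∑ j, B i j * f j = c i) := by
  classical
  set T : Finset (Fin η) := Finset.univ.filter (fun i => ∑ j, B i j * f j = c i) with hT
  set g : Fin ρ → ℝ := fun j => (f j)⁻¹ with hg
  -- Farkas hypothesis
  have hFH : ∀ d : Fin ρ → ℝ, (∀ i ∈ T, dotp (B i) d ≤ 0) → dotp g d ≤ 0 := by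
    intro d hd
    by_contra hgd
    push_neg at hgd
    set ψ : ℝ → ℝ := fun ε => ∑ j, d j / (f j + ε * d j) with hψ
    have hψ0 : ψ 0 = dotp g d := by
      simp only [hψ, zero_mul, add_zero, dotp, hg]
      exact Finset.sum_congr rfl fun j _ => (div_eq_inv_mul _ _)
    have h1 : ∀ᶠ ε in 𝓝 (0 : ℝ), ∀ j, 0 < f j + ε * d j := by
      rw [Filter.eventually_all]
      intro j
      have hopen : IsOpen {ε : ℝ | 0 < f j + ε * d j} :=
        isOpen_lt continuous_const (by continuity)
      have h0 : (0:ℝ) ∈ {ε : ℝ | 0 < f j + ε * d j} := by simp [hfpos j]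
      exact Filter.eventually_of_mem (hopen.mem_nhds h0) fun ε hε => hε
    have h2 : ∀ᶠ ε in 𝓝 (0 : ℝ), ∀ i, i ∉ T → ∑ j, B i j * (f j + ε * d j) ≤ c i := by
      rw [Filter.eventually_all]
      intro i
      by_cases hiT : i ∈ T
      · filter_upwards with ε hi
        exact (hi hiT).elim
      · have hlt : ∑ j, B i j * f j < c i := by
          refine lt_of_le_of_ne (hffeas.2 i) ?_
          intro heq
          exact hiT (Finset.mem_filter.2 ⟨Finset.mem_univ i, heq⟩)
        have hopen : IsOpen {ε : ℝ | ∑ j, B i j * (f j + ε * d j) < c i} := by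
          apply isOpen_lt _ continuous_const
          exact continuous_finset_sum _ fun j _ => by continuity
        have h0 : (0 : ℝ) ∈ {ε : ℝ | ∑ j, B i j * (f j + ε * d j) < c i} := by
          simpa using hlt
        exact Filter.eventually_of_mem (hopen.mem_nhds h0) fun ε hε _ => le_of_lt hε
    have h3 : ∀ᶠ ε in 𝓝 (0 : ℝ), 0 < ψ ε := by
      have hψc : ContinuousAt ψ 0 := by
        apply tendsto_finset_sum
        intro j _
        exact ContinuousAt.div continuousAt_const (by fun_prop)
          (by simpa using (hfpos j).ne')
      exact hψc.eventually (eventually_gt_nhds (by rw [hψ0]; exact hgd))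
    have hall := ((h1.and (h2.and h3)).filter_mono nhdsWithin_le_nhds).and
      (self_mem_nhdsWithin (s := Set.Ioi (0:ℝ)) (a := 0))
    obtain ⟨ε, ⟨hpos', hcap, hψε⟩, hεpos⟩ := hall.exists
    -- hεpos : 0 < ε
    set gε : Fin ρ → ℝ := fun j => f j + ε * d j with hgε
    have hfeas : Feasible B c gε := by
      refine ⟨fun j => (hpos' j).le, fun i => ?_⟩
      by_cases hiT : i ∈ T
      · have hti : ∑ j, B i j * f j = c i := (Finset.mem_filter.1 hiT).2
        have hdot : dotp (B i) d ≤ 0 := hd i hiT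
        have hexp : ∑ j, B i j * gε j = ∑ j, B i j * f j + ε * dotp (B i) d := by
          simp only [hgε, dotp, mul_add, Finset.sum_add_distrib, Finset.mul_sum]
          congr 1
          exact Finset.sum_congr rfl fun j _ => by ring
        rw [hexp, hti]
        nlinarith
      · exact hcap i hiT
    have hle := hmax gε hpos' hfeas
    have key : ∀ j, Real.log (f j) - Real.log (gε j) ≤ -(ε * d j / gε j) := by
      intro j
      have h1' := Real.log_le_sub_one_of_pos (div_pos (hfpos j) (hpos' j))
      rw [Real.log_div (hfpos j).ne' (hpos' j).ne'] at h1'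
      have : f j / gε j - 1 = -(ε * d j / gε j) := by
        have hne : gε j ≠ 0 := (hpos' j).ne'
        field_simp
        ring
      linarith [this ▸ h1']
    have hsum : ∑ j, (Real.log (f j) - Real.log (gε j)) ≤ ∑ j, -(ε * d j / gε j) :=
      Finset.sum_le_sum fun j _ => key j
    have hsum2 : ∑ j, -(ε * d j / gε j) = -(ε * ψ ε) := by
      rw [hψ, Finset.mul_sum, ← Finset.sum_neg_distrib]
      exact Finset.sum_congr rfl fun j _ => by rw [hgε]; ring
    rw [Finset.sum_sub_distrib, hsum2] at hsum
    have : 0 < ε * ψ ε := mul_pos hεpos hψε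
    linarith
  obtain ⟨μ₀, hμ₀, hμeq⟩ := farkas T B g hFH
  refine ⟨fun i => if i ∈ T then μ₀ i else 0, fun i => ?_, fun j => ?_, fun i => ?_, fun i => ?_⟩
  · dsimp only; split <;> [exact hμ₀ i; exact le_rfl]
  · have hsum : ∑ i, B i j * (if i ∈ T then μ₀ i else 0) = ∑ i ∈ T, μ₀ i * B i j := by
      rw [← Finset.sum_filter_add_sum_filter_not Finset.univ (· ∈ T)]
      have e1 : ∑ i ∈ Finset.univ.filter (· ∈ T), B i j * (if i ∈ T then μ₀ i else 0)
          = ∑ i ∈ T, μ₀ i * B i j := by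
        rw [Finset.filter_mem_eq_inter, Finset.univ_inter]
        exact Finset.sum_congr rfl fun i hi => by rw [if_pos hi]; ring
      have e2 : ∑ i ∈ Finset.univ.filter (¬ · ∈ T), B i j * (if i ∈ T then μ₀ i else 0) = 0 :=
        Finset.sum_eq_zero fun i hi => by
          rw [if_neg (Finset.mem_filter.1 hi).2, mul_zero]
      rw [e1, e2, add_zero]
    rw [hsum, ← hμeq j]
    simp only [hg]
    rw [one_div, inv_inv]
  · dsimp only
    by_cases hiT : i ∈ T
    · rw [(Finset.mem_filter.1 hiT).2]
      ring
    · rw [if_neg hiT, zero_mul]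
  · dsimp only
    intro hpos
    by_cases hiT : i ∈ T
    · exact (Finset.mem_filter.1 hiT).2
    · rw [if_neg hiT] at hpos; exact absurd hpos (lt_irrefl 0)
end

section
/- Let f : ℝ → (Fin ρ → ℝ) be differentiable with f_j(t) > 0 for all j and t, and suppose f satisfies the primal congestion-control dynamics: for every j, d/dt f_j(t) = 1 − f_j(t) · ∑_{i=1}^η B i j * p_i(y_i(t)), where y_i(t) = ∑_{j=1}^ρ B i j * f_j(t) and p_i(y) = max(0, y − c_i + ε)/ε² for a fixed ε > 0. Define the Lyapunov function Û(t) = ∑_{j=1}^ρ log(f_j(t)) − ∑_{i=1}^η ∫_0^{y_i(t)} p_i(z) dz. Then Û is differentiable with d/dt Û(t) = ∑_{j=1}^ρ (d/dt f_j(t))² / f_j(t) ≥ 0; in particular Û is nondecreasing along trajectories of the primal algorithm. -/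
open Finset MeasureTheory

/-- Along trajectories of the primal congestion-control dynamics, the Lyapunov
function `Û(t) = ∑ j, log (f j t) - ∑ i, ∫_0^{y i t} p i` is differentiable
with derivative `∑ j, (f j)'(t)² / f j t ≥ 0`; in particular `Û` is
nondecreasing. -/
theorem primal_dynamics_lyapunov_nondecreasing
    (η ρ : ℕ) (hη : 0 < η) (hρ : 0 < ρ)
    (B : Fin η → Fin ρ → ℝ) (hB : ∀ i j, B i j = 0 ∨ B i j = 1)
    (c : Fin η → ℝ) (hc : ∀ i, 0 < c i)
    (ε : ℝ) (hε : 0 < ε)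
    (f : ℝ → Fin ρ → ℝ)
    (hdiff : ∀ j, Differentiable ℝ (fun t => f t j))
    (hpos : ∀ t j, 0 < f t j)
    (hode : ∀ j t, deriv (fun s => f s j) t =
      1 - f t j * ∑ i, B i j *
        (max 0 ((∑ k, B i k * f t k) - c i + ε) / ε ^ 2)) :
    (∀ t, HasDerivAt
        (fun t => ∑ j, Real.log (f t j) -
          ∑ i, ∫ z in (0 : ℝ)..(∑ k, B i k * f t k),
            max 0 (z - c i + ε) / ε ^ 2)
        (∑ j, (deriv (fun s => f s j) t) ^ 2 / f t j) t) ∧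
    (∀ t, 0 ≤ ∑ j, (deriv (fun s => f s j) t) ^ 2 / f t j) ∧
    Monotone (fun t => ∑ j, Real.log (f t j) -
      ∑ i, ∫ z in (0 : ℝ)..(∑ k, B i k * f t k),
        max 0 (z - c i + ε) / ε ^ 2) := by
  have key : ∀ t, HasDerivAt
      (fun t => ∑ j, Real.log (f t j) -
        ∑ i, ∫ z in (0 : ℝ)..(∑ k, B i k * f t k),
          max 0 (z - c i + ε) / ε ^ 2)
      (∑ j, (deriv (fun s => f s j) t) ^ 2 / f t j) t := by
    intro t
    have hf' : ∀ j, HasDerivAt (fun s => f s j) (deriv (fun s => f s j) t) t :=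
      fun j => ((hdiff j) t).hasDerivAt
    have h1 : HasDerivAt (fun s => ∑ j, Real.log (f s j))
        (∑ j, deriv (fun s => f s j) t / f t j) t :=
      HasDerivAt.fun_sum fun j _ => (hf' j).log (hpos t j).ne'
    have h2 : ∀ i : Fin η, HasDerivAt
        (fun s => ∫ z in (0:ℝ)..(∑ k, B i k * f s k), max 0 (z - c i + ε)/ε^2)
        ((max 0 ((∑ k, B i k * f t k) - c i + ε)/ε^2) *
          (∑ k, B i k * deriv (fun s => f s k) t)) t := by
      intro i
      have hy : HasDerivAt (fun s => ∑ k, B i k * f s k)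
          (∑ k, B i k * deriv (fun s => f s k) t) t :=
        HasDerivAt.fun_sum fun k _ => (hf' k).const_mul _
      have hcont : Continuous (fun z : ℝ => max 0 (z - c i + ε)/ε^2) := by
        fun_prop
      have hint : HasDerivAt (fun x => ∫ z in (0:ℝ)..x, max 0 (z - c i + ε)/ε^2)
          (max 0 ((∑ k, B i k * f t k) - c i + ε)/ε^2) (∑ k, B i k * f t k) :=
        (hcont.integral_hasStrictDerivAt 0 _).hasDerivAt
      exact hint.comp t hy
    have hcomb := h1.fun_sub (HasDerivAt.fun_sum (fun i (_ : i ∈ Finset.univ) => h2 i))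
    convert hcomb using 1
    case e'_4 => rfl
    case e'_5 => rfl
    -- value equality
    rw [Finset.sum_congr rfl (fun (i : Fin η) _ =>
      Finset.mul_sum (a := max 0 ((∑ k, B i k * f t k) - c i + ε)/ε^2)
        (s := Finset.univ) (f := fun k => B i k * deriv (fun s => f s k) t)),
      Finset.sum_comm]
    have hS : ∀ j : Fin ρ,
        (∑ i, max 0 ((∑ k, B i k * f t k) - c i + ε)/ε^2 * (B i j * deriv (fun s => f s j) t))
        = (1 - deriv (fun s => f s j) t) / f t j * deriv (fun s => f s j) t := by
      intro j
      have h := hode j t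
      have hfj := (hpos t j).ne'
      have : (∑ i, B i j * (max 0 ((∑ k, B i k * f t k) - c i + ε) / ε ^ 2))
          = (1 - deriv (fun s => f s j) t) / f t j := by
        rw [eq_div_iff hfj]
        linear_combination h
      calc (∑ i, max 0 ((∑ k, B i k * f t k) - c i + ε)/ε^2 * (B i j * deriv (fun s => f s j) t))
          = (∑ i, B i j * (max 0 ((∑ k, B i k * f t k) - c i + ε) / ε ^ 2)) *
            deriv (fun s => f s j) t := by
            rw [Finset.sum_mul]; exact Finset.sum_congr rfl fun i _ => by ring
        _ = (1 - deriv (fun s => f s j) t) / f t j * deriv (fun s => f s j) t := by rw [this]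
    rw [Finset.sum_congr rfl fun j _ => hS j, ← Finset.sum_sub_distrib]
    refine Finset.sum_congr rfl fun j _ => ?_
    have hfj := (hpos t j).ne'
    field_simp
    ring
  have hnn : ∀ t, 0 ≤ ∑ j, (deriv (fun s => f s j) t) ^ 2 / f t j :=
    fun t => Finset.sum_nonneg fun j _ => div_nonneg (sq_nonneg _) (hpos t j).le
  refine ⟨key, hnn, ?_⟩
  have hd : Differentiable ℝ (fun t => ∑ j, Real.log (f t j) -
      ∑ i, ∫ z in (0 : ℝ)..(∑ k, B i k * f t k), max 0 (z - c i + ε) / ε ^ 2) :=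
    fun t => (key t).differentiableAt
  refine monotone_of_deriv_nonneg hd fun t => ?_
  rw [(key t).deriv]
  exact hnn t
end
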